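/- Let D be a single-variable domination rule defined by a sequential variable-set automaton (on variables {x, x†}). Suppose that for every n ∈ ℕ there exists a document d such that D admits n pairwise disjoint strict domination pairs on d. Then there exist words u, v, w ∈ Σ* and spans s1, s2 (each possibly undefined) within v such that for every n ≥ 1, the document u v^n w admits at least n pairwise disjoint strict domination pairs of D, namely one in each copy of v, obtained by translating (s1, s2) by the offset of that copy. -/

import Mathlib

namespace DocSpanners

/-- A span: a pair of endpoint positions `[i, j⟩`. -/
abbrev Span : Type := ℕ × ℕ

/-- `s` is a span of document `d`. -/
def IsSpanOf {α : Type} (d : List α) (s : Span) : Prop :=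
  s.1 ≤ s.2 ∧ s.2 ≤ d.length

/-- A (schemaless) mapping over variable type `V`: a partial assignment of spans. -/
abbrev Mapping (V : Type) : Type := V → Option Span

/-- `m` is a mapping of document `d`. -/
def MappingOf {α V : Type} (d : List α) (m : Mapping V) : Prop :=
  ∀ x s, m x = some s → IsSpanOf d s

/-- A spanner: maps documents to sets of mappings. -/
abbrev Spanner (α V : Type) : Type := List α → Set (Mapping V)

/-- Labels of a variable-set automaton: letters and variable markers. -/
inductive Label (α V : Type) : Type where
  | letter (a : α)
  | vopen (x : V)
  | vclose (x : V)
deriving DecidableEq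

/-- The sequence of letters of a ref-word. -/
def letters {α V : Type} (w : List (Label α V)) : List α :=
  w.filterMap fun l => match l with
    | Label.letter a => some a
    | _ => none

/-- A ref-word is valid if for each variable, either its markers do not appear, or
the opening and closing markers appear exactly once with the opening first. -/
def ValidRef {α V : Type} [DecidableEq α] [DecidableEq V] (w : List (Label α V)) : Prop :=
  ∀ x : V,
    (Label.vopen x ∉ w ∧ Label.vclose x ∉ w) ∨
    (w.count (Label.vopen x) = 1 ∧ w.count (Label.vclose x) = 1 ∧
      w.idxOf (Label.vopen x) < w.idxOf (Label.vclose x))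

/-- The mapping defined by a (valid) ref-word: each marked variable is sent to the
span delimited by the positions at which its markers are read. -/
def refMapping {α V : Type} [DecidableEq α] [DecidableEq V] (w : List (Label α V)) :
    Mapping V := fun x =>
  if Label.vopen x ∈ w then
    some ((letters (w.take (w.idxOf (Label.vopen x)))).length,
          (letters (w.take (w.idxOf (Label.vclose x)))).length)
  else none

/-- A variable-set automaton with state type `Q`. -/
structure VA (α V Q : Type) : Type where
  init : Q
  final : Set Q
  trans : Q → Label α V → Q → Prop

/-- Paths in a VA. -/
inductive VA.Path {α V Q : Type} (A : VA α V Q) : Q → List (Label α V) → Q → Prop where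
  | nil (q : Q) : VA.Path A q [] q
  | cons {q q' q'' : Q} {l : Label α V} {w : List (Label α V)} :
      A.trans q l q' → VA.Path A q' w q'' → VA.Path A q (l :: w) q''

/-- The VA accepts the ref-word `w` (an accepting run reads `w`). -/
def VA.AcceptsRef {α V Q : Type} (A : VA α V Q) (w : List (Label α V)) : Prop :=
  ∃ qf ∈ A.final, A.Path A.init w qf

/-- A VA is sequential if every accepting run is valid. -/
def VA.Sequential {α V Q : Type} [DecidableEq α] [DecidableEq V] (A : VA α V Q) : Prop :=
  ∀ w, A.AcceptsRef w → ValidRef w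

/-- The spanner defined by a (sequential) VA. -/
def VA.spanner {α V Q : Type} [DecidableEq α] [DecidableEq V] (A : VA α V Q) :
    Spanner α V := fun d =>
  {m | ∃ w, A.AcceptsRef w ∧ letters w = d ∧ refMapping w = m}

/-- A spanner is regular if it is defined by some sequential VA with finitely many states. -/
def IsRegular {α V : Type} [DecidableEq α] [DecidableEq V] (P : Spanner α V) : Prop :=
  ∃ (Q : Type) (_ : Fintype Q) (A : VA α V Q), A.Sequential ∧ A.spanner = P

/-- The skyline operator: keep only the mappings of `P d` that are maximal under `R d`. -/
def skyline {α V : Type} (P : Spanner α V)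
    (R : List α → Mapping V → Mapping V → Prop) : Spanner α V := fun d =>
  {m | m ∈ P d ∧ ∀ m' ∈ P d, m' ≠ m → ¬ R d m m'}

/-- The variable inclusion domination relation: `m2` extends `m1`. -/
def varIncRel {V : Type} (m1 m2 : Mapping V) : Prop :=
  ∀ x s, m1 x = some s → m2 x = some s

/-- Two mappings have the same domain. -/
def sameDom {V : Type} (m1 m2 : Mapping V) : Prop :=
  ∀ x, m1 x = none ↔ m2 x = none

/-- The span inclusion domination relation. -/
def spanIncRel {V : Type} (m1 m2 : Mapping V) : Prop :=
  sameDom m1 m2 ∧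
    ∀ x s1 s2, m1 x = some s1 → m2 x = some s2 → s2.1 ≤ s1.1 ∧ s1.2 ≤ s2.2

/-- The left-to-right domination relation: same start, `m2` no shorter. -/
def ltrRel {V : Type} (m1 m2 : Mapping V) : Prop :=
  sameDom m1 m2 ∧
    ∀ x s1 s2, m1 x = some s1 → m2 x = some s2 →
      s1.1 = s2.1 ∧ s1.2 - s1.1 ≤ s2.2 - s2.1

/-- The span length domination relation: `m2`'s spans are no shorter. -/
def spanLenRel {V : Type} (m1 m2 : Mapping V) : Prop :=
  sameDom m1 m2 ∧
    ∀ x s1 s2, m1 x = some s1 → m2 x = some s2 → s1.2 - s1.1 ≤ s2.2 - s2.1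


/-- The relation on span-or-undefined values defined by a single-variable domination
rule on variables `{x, x†}` (encoded as `Unit ⊕ Unit`, left = `x`, right = `x†`). -/
def pairRel {α : Type} (D : Spanner α (Unit ⊕ Unit)) (d : List α)
    (v1 v2 : Option Span) : Prop :=
  ∃ m ∈ D d, m (Sum.inl ()) = v1 ∧ m (Sum.inr ()) = v2

/-- `D` is a single-variable domination rule: on every document, `pairRel` is a partial
order on span-or-undefined values of the document. -/
def IsSingleVarDomRule {α : Type} (D : Spanner α (Unit ⊕ Unit)) : Prop :=
  ∀ d : List α,
    (∀ v : Option Span, (∀ s, v = some s → IsSpanOf d s) → pairRel D d v v) ∧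
    (∀ v1 v2 v3, pairRel D d v1 v2 → pairRel D d v2 v3 → pairRel D d v1 v3) ∧
    (∀ v1 v2, pairRel D d v1 v2 → pairRel D d v2 v1 → v1 = v2)

/-- The smallest span containing the defined components of a pair (the undefined value
`−` is contained in every span). -/
def pairHull : Option Span → Option Span → Span
  | some s1, some s2 => (min s1.1 s2.1, max s1.2 s2.2)
  | some s1, none => s1
  | none, some s2 => s2
  | none, none => (0, 0)

/-- Two spans are disjoint: no span of positive length is included in both. -/
def SpansDisjoint (s s' : Span) : Prop := min s.2 s'.2 ≤ max s.1 s'.1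

/-- Two strict domination pairs are disjoint if their hulls are disjoint. -/
def PairsDisjoint (p p' : Option Span × Option Span) : Prop :=
  SpansDisjoint (pairHull p.1 p.2) (pairHull p'.1 p'.2)

/-- Translating a span-or-undefined value by an offset. -/
def shiftOpt (o : ℕ) : Option Span → Option Span :=
  Option.map fun s => (s.1 + o, s.2 + o)

/-- `D` admits `n` pairwise disjoint strict domination pairs on `d`. -/
def HasDisjointStrictPairs {α : Type} (D : Spanner α (Unit ⊕ Unit)) (d : List α)
    (n : ℕ) : Prop :=
  ∃ f : Fin n → Option Span × Option Span,
    (∀ i, pairRel D d (f i).1 (f i).2 ∧ (f i).1 ≠ (f i).2) ∧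
    (∀ i j, i ≠ j → PairsDisjoint (f i) (f j))

section Cuts
variable {α V : Type}

def IsLetter : Label α V → Prop := fun l => ∃ a, l = Label.letter a

@[simp] lemma letters_nil : letters ([] : List (Label α V)) = [] := rfl
@[simp] lemma letters_cons_letter (a : α) (W : List (Label α V)) :
    letters (Label.letter a :: W) = a :: letters W := rfl
@[simp] lemma letters_cons_vopen (x : V) (W : List (Label α V)) :
    letters (Label.vopen x :: W) = letters W := rfl
@[simp] lemma letters_cons_vclose (x : V) (W : List (Label α V)) :
    letters (Label.vclose x :: W) = letters W := rfl

lemma letters_append (X Y : List (Label α V)) :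
    letters (X ++ Y) = letters X ++ letters Y := List.filterMap_append

def cutL : List (Label α V) → ℕ → ℕ
  | [], _ => 0
  | _ :: _, 0 => 0
  | Label.letter _ :: W, (k+1) => cutL W k + 1
  | Label.vopen _ :: W, (k+1) => cutL W (k+1) + 1
  | Label.vclose _ :: W, (k+1) => cutL W (k+1) + 1

def cutR : List (Label α V) → ℕ → ℕ
  | [], _ => 0
  | Label.letter _ :: _, 0 => 0
  | Label.letter _ :: W, (k+1) => cutR W k + 1
  | Label.vopen _ :: W, k => cutR W k + 1
  | Label.vclose _ :: W, k => cutR W k + 1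

lemma letters_take_cutL (W : List (Label α V)) (k : ℕ) :
    letters (W.take (cutL W k)) = (letters W).take k := by
  induction W generalizing k with
  | nil => simp [cutL]
  | cons l W ih =>
    cases l with
    | letter a => cases k with
      | zero => simp [cutL]
      | succ k => simp [cutL, ih]
    | vopen x => cases k with
      | zero => simp [cutL]
      | succ k => simpa [cutL] using ih (k+1)
    | vclose x => cases k with
      | zero => simp [cutL]
      | succ k => simpa [cutL] using ih (k+1)

lemma letters_take_cutR (W : List (Label α V)) (k : ℕ) :
    letters (W.take (cutR W k)) = (letters W).take k := by
  induction W generalizing k with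
  | nil => simp [cutR]
  | cons l W ih =>
    cases l with
    | letter a => cases k with
      | zero => simp [cutR]
      | succ k => simp [cutR, ih]
    | vopen x => simpa [cutR] using ih k
    | vclose x => simpa [cutR] using ih k

lemma cutL_le_length (W : List (Label α V)) (k : ℕ) : cutL W k ≤ W.length := by
  induction W generalizing k with
  | nil => simp [cutL]
  | cons l W ih =>
    cases l with
    | letter a => cases k with
      | zero => simp [cutL]
      | succ k => simpa [cutL] using ih k
    | vopen x => cases k with
      | zero => simp [cutL]
      | succ k => simpa [cutL] using ih (k+1)
    | vclose x => cases k with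
      | zero => simp [cutL]
      | succ k => simpa [cutL] using ih (k+1)

lemma cutR_le_length (W : List (Label α V)) (k : ℕ) : cutR W k ≤ W.length := by
  induction W generalizing k with
  | nil => simp [cutR]
  | cons l W ih =>
    cases l with
    | letter a => cases k with
      | zero => simp [cutR]
      | succ k => simpa [cutR] using ih k
    | vopen x => simpa [cutR] using ih k
    | vclose x => simpa [cutR] using ih k

lemma count_lt_of_lt_cutL (W : List (Label α V)) (k t : ℕ) (h : t < cutL W k) :
    (letters (W.take t)).length < k := by
  induction W generalizing k t with
  | nil => simp [cutL] at h
  | cons l W ih =>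
    cases l with
    | letter a => cases k with
      | zero => simp [cutL] at h
      | succ k =>
        cases t with
        | zero => simp
        | succ t => simp only [cutL] at h; simpa using Nat.succ_lt_succ (ih k t (by omega))
    | vopen x => cases k with
      | zero => simp [cutL] at h
      | succ k =>
        cases t with
        | zero => simp
        | succ t => simp only [cutL] at h; simpa using ih (k+1) t (by omega)
    | vclose x => cases k with
      | zero => simp [cutL] at h
      | succ k =>
        cases t with
        | zero => simp
        | succ t => simp only [cutL] at h; simpa using ih (k+1) t (by omega)

lemma cutR_marker (W : List (Label α V)) (k t : ℕ) (h : cutR W k ≤ t) (ht : t < W.length)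
    (hm : ¬ IsLetter (W.get ⟨t, ht⟩)) : k < (letters (W.take t)).length := by
  induction W generalizing k t with
  | nil => simp at ht
  | cons l W ih =>
    cases l with
    | letter a =>
      cases t with
      | zero => exact absurd ⟨a, rfl⟩ hm
      | succ t =>
        cases k with
        | zero => simp
        | succ k =>
          simp only [cutR] at h
          have := ih k t (by omega) (by simpa using ht) (by simpa using hm)
          simpa using Nat.succ_lt_succ this
    | vopen x =>
      simp only [cutR] at h
      cases t with
      | zero => omega
      | succ t =>
        have := ih k t (by omega) (by simpa using ht) (by simpa using hm)
        simpa using this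
    | vclose x =>
      simp only [cutR] at h
      cases t with
      | zero => omega
      | succ t =>
        have := ih k t (by omega) (by simpa using ht) (by simpa using hm)
        simpa using this

lemma letters_drop_cutR (W : List (Label α V)) (k : ℕ) :
    letters (W.drop (cutR W k)) = (letters W).drop k := by
  have h2 : letters (W.take (cutR W k)) ++ letters (W.drop (cutR W k)) = letters W := by
    rw [← letters_append, List.take_append_drop]
  rw [letters_take_cutR] at h2
  have h3 := congrArg (List.drop ((letters W).take k).length) h2
  rw [List.drop_left] at h3
  rw [h3, List.length_take]
  rcases le_or_gt k (letters W).length with h | h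
  · rw [min_eq_left h]
  · rw [min_eq_right h.le, List.drop_eq_nil_of_le (le_refl _), List.drop_eq_nil_of_le h.le]

lemma lettercount_take_mono (W : List (Label α V)) {t t' : ℕ} (h : t ≤ t') :
    (letters (W.take t)).length ≤ (letters (W.take t')).length := by
  have hsplit := List.take_append_drop t (W.take t')
  rw [List.take_take, min_eq_left h] at hsplit
  rw [← hsplit, letters_append, List.length_append]
  omega

lemma cutL_le_of_count_ge (W : List (Label α V)) (k t : ℕ)
    (h : k ≤ (letters (W.take t)).length) : cutL W k ≤ t := by
  by_contra hc
  exact absurd h (not_le.2 (count_lt_of_lt_cutL W k t (by omega)))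

lemma lettercount_take_le (W : List (Label α V)) (t : ℕ) :
    (letters (W.take t)).length ≤ (letters W).length := by
  conv_rhs => rw [← List.take_append_drop t W]
  rw [letters_append, List.length_append]
  omega

lemma indexOf_lt_of_mem_take [DecidableEq α] [DecidableEq V]
    {l : Label α V} {W : List (Label α V)} {t : ℕ} (h : l ∈ W.take t) :
    W.idxOf l < t := by
  have hmem : l ∈ W := List.mem_of_mem_take h
  have h1 : W.idxOf l = (W.take t).idxOf l := by
    conv_lhs => rw [← List.take_append_drop t W]
    rw [List.idxOf_append_of_mem h]
  have := List.idxOf_lt_length_iff.2 h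
  rw [h1]
  exact lt_of_lt_of_le this (by simpa using List.length_take_le t W)

lemma mem_take_of_indexOf_lt [DecidableEq α] [DecidableEq V]
    {l : Label α V} {W : List (Label α V)} {t : ℕ} (hmem : l ∈ W)
    (h : W.idxOf l < t) : l ∈ W.take t := by
  by_contra hc
  have h1 : W.idxOf l = (W.take t).length + (W.drop t).idxOf l := by
    conv_lhs => rw [← List.take_append_drop t W]
    exact List.idxOf_append_of_notMem hc
  have h2 : t ≤ W.length := by
    by_contra h3
    exact hc (by rwa [List.take_of_length_le (by omega)])
  rw [List.length_take, min_eq_left h2] at h1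
  omega

variable [DecidableEq α] [DecidableEq V]

/-- Position (in letters) of a label occurrence. -/
def labelPos (W : List (Label α V)) (l : Label α V) : ℕ :=
  (letters (W.take (W.idxOf l))).length

def NoMarker (W : List (Label α V)) : Prop := ∀ l ∈ W, IsLetter l

lemma noMarker_take_cutL {W : List (Label α V)} {k : ℕ}
    (h : ∀ l ∈ W, ¬ IsLetter l → k ≤ labelPos W l) :
    NoMarker (W.take (cutL W k)) := by
  intro l hl
  by_contra hm
  have hmem : l ∈ W := List.mem_of_mem_take hl
  have hlt := indexOf_lt_of_mem_take hl
  have := count_lt_of_lt_cutL W k _ hlt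
  exact absurd (h l hmem hm) (not_le.2 this)

lemma noMarker_drop_cutR {W : List (Label α V)} {k : ℕ}
    (hcount : ∀ l ∈ W, ¬ IsLetter l → W.count l ≤ 1)
    (h : ∀ l ∈ W, ¬ IsLetter l → labelPos W l ≤ k) :
    NoMarker (W.drop (cutR W k)) := by
  intro l hl
  by_contra hm
  have hmem : l ∈ W := List.mem_of_mem_drop hl
  have hnt : l ∉ W.take (cutR W k) := by
    intro hc
    have h1 : 1 ≤ (W.take (cutR W k)).count l := List.count_pos_iff.2 hc
    have h2 : 1 ≤ (W.drop (cutR W k)).count l := List.count_pos_iff.2 hl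
    have h3 : (W.take (cutR W k)).count l + (W.drop (cutR W k)).count l = W.count l := by
      rw [← List.count_append, List.take_append_drop]
    have := hcount l hmem hm
    omega
  have hge : cutR W k ≤ W.idxOf l := by
    by_contra hc
    exact hnt (mem_take_of_indexOf_lt hmem (by omega))
  have hlt : W.idxOf l < W.length := List.idxOf_lt_length_iff.2 hmem
  have := cutR_marker W k _ hge hlt (by rwa [List.idxOf_get])
  exact absurd (h l hmem hm) (not_le.2 this)

end Cuts

section Paths
variable {α V Q : Type} {A : VA α V Q}

lemma path_append {p q r : Q} {X Y : List (Label α V)}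
    (h1 : A.Path p X q) (h2 : A.Path q Y r) : A.Path p (X ++ Y) r := by
  induction h1 with
  | nil => simpa using h2
  | cons ht hp ih => exact VA.Path.cons ht (ih h2)

lemma path_flatten_replicate {p : Q} {X : List (Label α V)} (h : A.Path p X p) (i : ℕ) :
    A.Path p (List.flatten (List.replicate i X)) p := by
  induction i with
  | zero => exact VA.Path.nil p
  | succ i ih => simpa [List.replicate_succ] using path_append h ih

/-- A run function for a word. -/
def IsRun (A : VA α V Q) (W : List (Label α V)) (ρ : ℕ → Q) : Prop :=
  ∀ t (ht : t < W.length), A.trans (ρ t) (W.get ⟨t, ht⟩) (ρ (t+1))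

lemma path_of_run {W : List (Label α V)} {ρ : ℕ → Q} (h : IsRun A W ρ) :
    A.Path (ρ 0) W (ρ W.length) := by
  induction W generalizing ρ with
  | nil => exact VA.Path.nil _
  | cons l W ih =>
    refine VA.Path.cons (h 0 (by simp)) ?_
    have := ih (ρ := fun t => ρ (t+1)) (fun t ht => h (t+1) (by simpa using ht))
    simpa using this

lemma exists_run_of_path {p q : Q} {W : List (Label α V)} (h : A.Path p W q) :
    ∃ ρ : ℕ → Q, ρ 0 = p ∧ ρ W.length = q ∧ IsRun A W ρ := by
  induction h with
  | nil q => exact ⟨fun _ => q, rfl, rfl, fun t ht => by simp at ht⟩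
  | @cons q q' q'' l w ht hp ih =>
    obtain ⟨ρ, h0, hl, hr⟩ := ih
    refine ⟨fun t => Nat.rec q (fun t _ => ρ t) t, rfl, by simpa using hl, ?_⟩
    intro t htl
    cases t with
    | zero => simpa [h0] using ht
    | succ t => exact hr t (by simpa using htl)

lemma run_segment {W : List (Label α V)} {ρ : ℕ → Q} (h : IsRun A W ρ)
    {t1 t2 : ℕ} (h12 : t1 ≤ t2) (h2 : t2 ≤ W.length) :
    A.Path (ρ t1) ((W.take t2).drop t1) (ρ t2) := by
  obtain ⟨n, rfl⟩ : ∃ n, t2 = t1 + n := ⟨t2 - t1, by omega⟩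
  clear h12
  induction n generalizing t1 with
  | zero =>
    have : (W.take t1).drop t1 = [] :=
      List.drop_eq_nil_of_le (List.length_take_le t1 W)
    rw [Nat.add_zero, this]
    exact VA.Path.nil (ρ t1)
  | succ n ih =>
    have ht1 : t1 < W.length := by omega
    have hdrop : (W.take (t1 + (n+1))).drop t1
        = W.get ⟨t1, ht1⟩ :: (W.take (t1 + (n+1))).drop (t1+1) := by
      rw [List.drop_eq_getElem_cons (by simp [List.length_take]; omega)]
      simp [List.getElem_take]
    rw [hdrop]
    refine VA.Path.cons (h t1 ht1) ?_
    have := ih (t1 := t1 + 1) (by omega)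
    have heq : t1 + 1 + n = t1 + (n + 1) := by omega
    rwa [heq] at this

end Paths

section Ramsey
variable {C : Type} [Fintype C] [DecidableEq C] [Nonempty C]

lemma premono (f : ℕ → ℕ → C) :
    ∀ (t : ℕ) (S : Finset ℕ), (Fintype.card C + 1) ^ t ≤ S.card →
    ∃ (x : Fin t → ℕ) (c : Fin t → C), StrictMono x ∧ (∀ i, x i ∈ S) ∧
      ∀ i j : Fin t, i < j → f (x i) (x j) = c i := by
  intro t
  induction t with
  | zero =>
    intro S _
    exact ⟨Fin.elim0, Fin.elim0, fun i => i.elim0, fun i => i.elim0, fun i => i.elim0⟩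
  | succ t ih =>
    intro S hS
    set r := Fintype.card C with hr
    have hr1 : 1 ≤ r := Fintype.card_pos
    have hP : 1 ≤ (r + 1) ^ t := Nat.one_le_pow _ _ (by omega)
    have hSpos : 0 < S.card := lt_of_lt_of_le (by positivity) hS
    have hSne : S.Nonempty := Finset.card_pos.1 hSpos
    set x₀ := S.min' hSne with hx₀
    set S' := S.erase x₀ with hS'
    have hcard' : S'.card + 1 = S.card := by
      rw [hS', Finset.card_erase_of_mem (S.min'_mem hSne)]; omega
    -- pigeonhole
    obtain ⟨A', hA'⟩ : ∃ A', (r + 1) ^ t = A' + 1 := ⟨(r + 1) ^ t - 1, by omega⟩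
    have hbig : r * A' + r + A' + 1 ≤ S.card := by
      have : (r + 1) ^ (t + 1) = r * A' + r + A' + 1 := by
        rw [pow_succ, hA']; ring
      omega
    have hmaps : ∀ z ∈ S', (fun z => f x₀ z) z ∈ (Finset.univ : Finset C) := by
      intro z _; exact Finset.mem_univ _
    have hlt : (Finset.univ : Finset C).card * A' < S'.card := by
      have h1 : r * A' + 1 ≤ S'.card := by omega
      simpa [← hr] using lt_of_lt_of_le (Nat.lt_succ_self _) h1
    obtain ⟨c₀, _, hc₀⟩ := Finset.exists_lt_card_fiber_of_mul_lt_card_of_maps_to hmaps hlt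
    set T := S'.filter (fun z => f x₀ z = c₀) with hT
    have hTcard : (r + 1) ^ t ≤ T.card := by omega
    obtain ⟨x, c, hmono, hmem, hcol⟩ := ih T hTcard
    have hmemS' : ∀ i, x i ∈ S' := fun i => (Finset.mem_filter.1 (hmem i)).1
    have hfx : ∀ i, f x₀ (x i) = c₀ := fun i => (Finset.mem_filter.1 (hmem i)).2
    have hx₀lt : ∀ i, x₀ < x i := by
      intro i
      have h1 := S.min'_le (x i) (Finset.mem_of_mem_erase (hmemS' i))
      have h2 : x i ≠ x₀ := Finset.ne_of_mem_erase (hmemS' i)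
      omega
    refine ⟨Fin.cons x₀ x, Fin.cons c₀ c, ?_, ?_, ?_⟩
    · intro i j hij
      induction j using Fin.cases with
      | zero => exact absurd hij (by simp [Fin.lt_def])
      | succ j =>
        induction i using Fin.cases with
        | zero =>
          simp only [Fin.cons_zero, Fin.cons_succ]
          exact hx₀lt j
        | succ i =>
          simp only [Fin.cons_succ]
          exact hmono (Fin.succ_lt_succ_iff.mp hij)
    · intro i
      induction i using Fin.cases with
      | zero =>
        simp only [Fin.cons_zero]
        exact S.min'_mem hSne
      | succ i =>
        simp only [Fin.cons_succ]
        exact Finset.mem_of_mem_erase (hmemS' i)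
    · intro i j hij
      induction j using Fin.cases with
      | zero => exact absurd hij (by simp [Fin.lt_def])
      | succ j =>
        induction i using Fin.cases with
        | zero =>
          simp only [Fin.cons_zero, Fin.cons_succ]
          exact hfx j
        | succ i =>
          simp only [Fin.cons_succ]
          exact hcol i j (Fin.succ_lt_succ_iff.mp hij)

lemma mono_five (f : ℕ → ℕ → C) (S : Finset ℕ)
    (h : (Fintype.card C + 1) ^ (4 * Fintype.card C + 1) ≤ S.card) :
    ∃ x : Fin 5 → ℕ, StrictMono x ∧ (∀ i, x i ∈ S) ∧
      ∃ cc : C, ∀ i j : Fin 5, i < j → f (x i) (x j) = cc := by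
  set r := Fintype.card C with hr
  obtain ⟨x, c, hmono, hmem, hcol⟩ := premono f (4 * r + 1) S h
  have hmaps : ∀ i ∈ (Finset.univ : Finset (Fin (4 * r + 1))), c i ∈ (Finset.univ : Finset C) :=
    fun i _ => Finset.mem_univ _
  have hlt : (Finset.univ : Finset C).card * 4 < (Finset.univ : Finset (Fin (4 * r + 1))).card := by
    simp [← hr]; omega
  obtain ⟨cc, _, hcc⟩ := Finset.exists_lt_card_fiber_of_mul_lt_card_of_maps_to hmaps hlt
  set F := Finset.univ.filter (fun i => c i = cc) with hF
  obtain ⟨F', hF'sub, hF'card⟩ := Finset.exists_subset_card_eq (show 5 ≤ F.card by omega)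
  set ι := F'.orderIsoOfFin hF'card with hι
  have hιmono : StrictMono (fun i : Fin 5 => ((ι i : F') : Fin (4 * r + 1))) :=
    fun i j hij => ι.strictMono hij
  refine ⟨fun i => x (ι i), ?_, fun i => hmem _, cc, ?_⟩
  · exact fun i j hij => hmono (hιmono hij)
  · intro i j hij
    have h1 : ((ι i : F') : Fin (4 * r + 1)) ∈ F := hF'sub (ι i).2
    have h2 : c (ι i) = cc := (Finset.mem_filter.1 h1).2
    rw [hcol _ _ (hιmono hij), h2]

end Ramsey

section RefMap
variable {α V : Type} [DecidableEq α] [DecidableEq V]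

lemma cutR_mono (W : List (Label α V)) {k k' : ℕ} (h : k ≤ k') : cutR W k ≤ cutR W k' := by
  induction W generalizing k k' with
  | nil => simp [cutR]
  | cons l W ih =>
    cases l with
    | letter a =>
      cases k with
      | zero => cases k' with
        | zero => simp
        | succ k' => simp [cutR]
      | succ k =>
        cases k' with
        | zero => omega
        | succ k' => simpa [cutR] using ih (by omega)
    | vopen x => simpa [cutR] using ih h
    | vclose x => simpa [cutR] using ih h

lemma pos_append_eq (P M S : List (Label α V)) {l : Label α V} (hP : l ∉ P) (hM : l ∈ M) :
    (letters ((P ++ M ++ S).take ((P ++ M ++ S).idxOf l))).length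
      = (letters P).length + (letters (M.take (M.idxOf l))).length := by
  have hidx : (P ++ M ++ S).idxOf l = P.length + M.idxOf l := by
    rw [List.append_assoc, List.idxOf_append_of_notMem hP, List.idxOf_append_of_mem hM]
  have hiM : M.idxOf l ≤ M.length := (List.idxOf_lt_length_iff.2 hM).le
  rw [hidx, List.append_assoc, List.take_length_add_append, List.take_append_of_le_length hiM,
      letters_append, List.length_append]

lemma refMapping_decomp_some (P M S : List (Label α V)) (z : V)
    (hPo : Label.vopen z ∉ P) (hPc : Label.vclose z ∉ P)
    (hMo : Label.vopen z ∈ M) (hMc : Label.vclose z ∈ M) :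
    refMapping (P ++ M ++ S) z =
      some ((letters P).length + (letters (M.take (M.idxOf (Label.vopen z)))).length,
            (letters P).length + (letters (M.take (M.idxOf (Label.vclose z)))).length) := by
  have hmem : Label.vopen z ∈ P ++ M ++ S := by simp [hMo]
  simp only [refMapping, if_pos hmem]
  rw [pos_append_eq P M S hPo hMo, pos_append_eq P M S hPc hMc]

lemma refMapping_decomp_none (W : List (Label α V)) (z : V)
    (h : Label.vopen z ∉ W) : refMapping W z = none := by
  simp only [refMapping, if_neg h]

lemma refMapping_isSpan {W : List (Label α V)} (hval : ValidRef W) {z : V} {s : Span}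
    (h : refMapping W z = some s) :
    Label.vopen z ∈ W ∧ Label.vclose z ∈ W ∧
    labelPos W (Label.vopen z) = s.1 ∧ labelPos W (Label.vclose z) = s.2 ∧
    s.1 ≤ s.2 ∧ s.2 ≤ (letters W).length := by
  by_cases hmem : Label.vopen z ∈ W
  · simp only [refMapping, if_pos hmem] at h
    rcases hval z with ⟨hno, _⟩ | ⟨h1, h2, h3⟩
    · exact absurd hmem hno
    · have hcmem : Label.vclose z ∈ W := List.count_pos_iff.1 (by omega)
      obtain ⟨hs1, hs2⟩ : (letters (W.take (W.idxOf (Label.vopen z)))).length = s.1 ∧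
          (letters (W.take (W.idxOf (Label.vclose z)))).length = s.2 := by
        have := h.symm
        exact ⟨congrArg Prod.fst (Option.some.inj this) ▸ rfl, by
          have h' := Option.some.inj h
          exact congrArg Prod.snd h'⟩
      refine ⟨hmem, hcmem, hs1, hs2, ?_, ?_⟩
      · rw [← hs1, ← hs2]
        exact lettercount_take_mono W h3.le
      · rw [← hs2]
        exact lettercount_take_le W _
  · simp only [refMapping, if_neg hmem] at h
    exact absurd h (by simp)

lemma refMapping_none_of_eq_none {W : List (Label α V)} {z : V}
    (h : refMapping W z = none) : Label.vopen z ∉ W := by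
  intro hmem
  simp only [refMapping, if_pos hmem] at h
  exact absurd h (by simp)

lemma marker_count_le_one {W : List (Label α V)} (hval : ValidRef W) :
    ∀ l ∈ W, ¬ IsLetter l → W.count l ≤ 1 := by
  intro l hmem hnl
  cases l with
  | letter a => exact absurd ⟨a, rfl⟩ hnl
  | vopen z =>
    rcases hval z with ⟨hno, _⟩ | ⟨h1, _, _⟩
    · exact absurd hmem hno
    · omega
  | vclose z =>
    rcases hval z with ⟨_, hno⟩ | ⟨_, h2, _⟩
    · exact absurd hmem hno
    · omega

lemma marker_pos_bound {W : List (Label α V)} (hval : ValidRef W) {lo hi : ℕ}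
    (h : ∀ z s, refMapping W z = some s → lo ≤ s.1 ∧ s.2 ≤ hi) :
    ∀ l ∈ W, ¬ IsLetter l → lo ≤ labelPos W l ∧ labelPos W l ≤ hi := by
  intro l hmem hnl
  cases l with
  | letter a => exact absurd ⟨a, rfl⟩ hnl
  | vopen z =>
    have : refMapping W z = some ((letters (W.take (W.idxOf (Label.vopen z)))).length,
        (letters (W.take (W.idxOf (Label.vclose z)))).length) := by
      simp only [refMapping, if_pos hmem]
    obtain ⟨hlo, hhi⟩ := h z _ this
    obtain ⟨_, _, hp1, hp2, hle, _⟩ := refMapping_isSpan hval this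
    exact ⟨by simpa [labelPos] using hlo, by
      simp only [labelPos]
      exact le_trans hle hhi⟩
  | vclose z =>
    rcases hval z with ⟨_, hno⟩ | ⟨h1, _, _⟩
    · exact absurd hmem hno
    · have hom : Label.vopen z ∈ W := List.count_pos_iff.1 (by omega)
      have : refMapping W z = some ((letters (W.take (W.idxOf (Label.vopen z)))).length,
          (letters (W.take (W.idxOf (Label.vclose z)))).length) := by
        simp only [refMapping, if_pos hom]
      obtain ⟨hlo, hhi⟩ := h z _ this
      obtain ⟨_, _, hp1, hp2, hle, _⟩ := refMapping_isSpan hval this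
      exact ⟨le_trans hlo (by simpa [labelPos] using hle), by simpa [labelPos] using hhi⟩

lemma not_mem_of_noMarker {X : List (Label α V)} (h : NoMarker X) {z : V} :
    Label.vopen z ∉ X ∧ Label.vclose z ∉ X := by
  constructor <;> intro hm
  · obtain ⟨a, ha⟩ := h _ hm; exact absurd ha (by simp)
  · obtain ⟨a, ha⟩ := h _ hm; exact absurd ha (by simp)

lemma noMarker_flatten_replicate {X : List (Label α V)} (h : NoMarker X) (i : ℕ) :
    NoMarker (List.flatten (List.replicate i X)) := by
  intro l hl
  obtain ⟨Y, hY, hlY⟩ := List.mem_flatten.1 hl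
  rw [List.eq_of_mem_replicate hY] at hlY
  exact h l hlY

lemma letters_flatten_replicate (X : List (Label α V)) (i : ℕ) :
    letters (List.flatten (List.replicate i X)) = List.flatten (List.replicate i (letters X)) := by
  induction i with
  | zero => simp
  | succ i ih => simp [List.replicate_succ, letters_append, ih]

lemma letters_slice {W : List (Label α V)} {t1 t2 : ℕ} {L1 L2 : List α} (h12 : t1 ≤ t2)
    (h1 : letters (W.take t1) = L1) (h2 : letters (W.take t2) = L2) :
    letters ((W.take t2).drop t1) = L2.drop L1.length := by
  have hsplit := List.take_append_drop t1 (W.take t2)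
  rw [List.take_take, min_eq_left h12] at hsplit
  have h3 := congrArg letters hsplit
  rw [letters_append, h1, h2] at h3
  have := congrArg (List.drop L1.length) h3
  rwa [List.drop_left] at this

lemma mem_middle {W : List (Label α V)} {t1 t2 : ℕ} {l : Label α V}
    (hmem : l ∈ W) (hnP : l ∉ W.take t1) (hnS : l ∉ W.drop t2) (h12 : t1 ≤ t2) :
    l ∈ (W.take t2).drop t1 := by
  have h1 : l ∈ W.take t2 := by
    have hm2 : l ∈ W.take t2 ++ W.drop t2 := by rwa [List.take_append_drop t2 W]
    rcases List.mem_append.1 hm2 with h | h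
    · exact h
    · exact absurd h hnS
  have hsplit : W.take t2 = W.take t1 ++ (W.take t2).drop t1 := by
    conv_lhs => rw [← List.take_append_drop t1 (W.take t2)]
    rw [List.take_take, min_eq_left h12]
  rcases List.mem_append.1 (hsplit ▸ h1) with h | h
  · exact absurd h hnP
  · exact h

end RefMap

section Hulls

lemma pairHull_spec (v1 v2 : Option Span) :
    (∀ s : Span, v1 = some s → (pairHull v1 v2).1 ≤ s.1 ∧ s.2 ≤ (pairHull v1 v2).2) ∧
    (∀ s : Span, v2 = some s → (pairHull v1 v2).1 ≤ s.1 ∧ s.2 ≤ (pairHull v1 v2).2) := by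
  cases v1 <;> cases v2 <;> constructor <;> intro s hs <;>
    simp_all [pairHull] <;> omega

lemma shift_pairHull (o : ℕ) (s1 s2 : Option Span) (hn : ¬(s1 = none ∧ s2 = none)) :
    pairHull (shiftOpt o s1) (shiftOpt o s2) = ((pairHull s1 s2).1 + o, (pairHull s1 s2).2 + o) := by
  cases s1 <;> cases s2 <;> simp_all [pairHull, shiftOpt, Prod.ext_iff] <;> omega

lemma shiftOpt_injective (o : ℕ) : Function.Injective (shiftOpt o) := by
  intro p q hpq
  cases p <;> cases q <;> simp_all [shiftOpt, Prod.ext_iff] <;> omega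

lemma spansDisjoint_symm {s s' : Span} (h : SpansDisjoint s s') : SpansDisjoint s' s := by
  unfold SpansDisjoint at *; omega

lemma flatten_replicate_split {β : Type} (v : List β) {n i : ℕ} (h : i < n) :
    List.flatten (List.replicate n v) =
      List.flatten (List.replicate i v) ++ v ++ List.flatten (List.replicate (n - 1 - i) v) := by
  conv_lhs => rw [show n = i + (1 + (n - 1 - i)) by omega]
  rw [List.replicate_add, List.replicate_add, List.flatten_append, List.flatten_append]
  simp [List.append_assoc]

lemma length_flatten_replicate {β : Type} (v : List β) (i : ℕ) :
    (List.flatten (List.replicate i v)).length = i * v.length := by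
  induction i with
  | zero => simp
  | succ i ih => simp [List.replicate_succ, ih]; ring

end Hulls


/-- If a single-variable domination rule `D` defined by a sequential
VA admits, for every `n`, a document with `n` pairwise disjoint strict domination pairs,
then there are words `u, v, w` and values `s1, s2` within `v` such that for every
`n ≥ 1` the document `u v^n w` admits `n` pairwise disjoint strict domination pairs of
`D`, one in each copy of `v`, obtained by translating `(s1, s2)`. -/
theorem umdsdp_pumping {α : Type} [Fintype α] [DecidableEq α]
    (D : Spanner α (Unit ⊕ Unit)) (hreg : IsRegular D) (hrule : IsSingleVarDomRule D)
    (h : ∀ n : ℕ, ∃ d : List α, HasDisjointStrictPairs D d n) :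
    ∃ u v w : List α, ∃ s1 s2 : Option Span,
      s1 ≠ s2 ∧
      (∀ s, s1 = some s → s.1 ≤ s.2 ∧ s.2 ≤ v.length) ∧
      (∀ s, s2 = some s → s.1 ≤ s.2 ∧ s.2 ≤ v.length) ∧
      ∀ n : ℕ, 1 ≤ n →
        (∀ i : Fin n,
            pairRel D (u ++ (List.replicate n v).flatten ++ w)
              (shiftOpt (u.length + i.1 * v.length) s1)
              (shiftOpt (u.length + i.1 * v.length) s2) ∧
            shiftOpt (u.length + i.1 * v.length) s1 ≠
              shiftOpt (u.length + i.1 * v.length) s2) ∧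
        (∀ i j : Fin n, i ≠ j →
            PairsDisjoint
              (shiftOpt (u.length + i.1 * v.length) s1,
               shiftOpt (u.length + i.1 * v.length) s2)
              (shiftOpt (u.length + j.1 * v.length) s1,
               shiftOpt (u.length + j.1 * v.length) s2)) := by
  classical
  obtain ⟨Q, hQfin, A, hseq, hAD⟩ := hreg
  by_cases hA : ∃ (d : List α) (c : ℕ), c ≤ d.length ∧
      (pairRel D d none (some (c, c)) ∨ pairRel D d (some (c, c)) none)
  · -- degenerate case: an empty-hull strict pair exists; take v = []
    obtain ⟨d, c, hc, hrel⟩ := hA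
    have hflat : ∀ n : ℕ, (List.replicate n ([] : List α)).flatten = [] := by
      intro n; simp
    have hdoc : ∀ n : ℕ, d.take c ++ (List.replicate n ([] : List α)).flatten ++ d.drop c = d := by
      intro n; rw [hflat]; simp
    have hlen : (d.take c).length = c := by simp [hc]
    have hshift : ∀ o : ℕ, shiftOpt o (some ((0 : ℕ), (0 : ℕ))) = some (o, o) := by
      intro o; simp [shiftOpt]
    have hshiftn : ∀ o : ℕ, shiftOpt o (none : Option Span) = none := by
      intro o; simp [shiftOpt]
    have hoff : ∀ (i : ℕ), (d.take c).length + i * ([] : List α).length = c := by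
      intro i; simp [hlen]
    rcases hrel with hrel | hrel
    · refine ⟨d.take c, [], d.drop c, none, some (0, 0), by simp, by simp, ?_, ?_⟩
      · intro s hs
        simp only [Option.some.injEq] at hs
        subst hs; simp
      · intro n hn
        constructor
        · intro i
          rw [hoff i.1, hshift, hshiftn, hdoc]
          exact ⟨hrel, by simp⟩
        · intro i j hij
          rw [hoff i.1, hoff j.1, hshift, hshiftn]
          simp [PairsDisjoint, SpansDisjoint, pairHull]
    · refine ⟨d.take c, [], d.drop c, some (0, 0), none, by simp, ?_, by simp, ?_⟩
      · intro s hs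
        simp only [Option.some.injEq] at hs
        subst hs; simp
      · intro n hn
        constructor
        · intro i
          rw [hoff i.1, hshift, hshiftn, hdoc]
          exact ⟨hrel, by simp⟩
        · intro i j hij
          rw [hoff i.1, hoff j.1, hshift, hshiftn]
          simp [PairsDisjoint, SpansDisjoint, pairHull]

  · -- main case: all strict pairs have nonempty hulls
    haveI : Fintype Q := hQfin
    haveI : DecidableEq Q := Classical.decEq Q
    haveI : Nonempty (Q × Q) := ⟨(A.init, A.init)⟩
    set N : ℕ := (Fintype.card (Q × Q) + 1) ^ (4 * Fintype.card (Q × Q) + 1) with hN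
    obtain ⟨d, f, hf1, hf2⟩ := h N
    -- witnesses
    have hmap : ∀ i : Fin N, ∃ mm, mm ∈ D d ∧ mm (Sum.inl ()) = (f i).1 ∧
        mm (Sum.inr ()) = (f i).2 := by
      intro i
      obtain ⟨mm, hmm, h1, h2⟩ := (hf1 i).1
      exact ⟨mm, hmm, h1, h2⟩
    choose m hmD hm1 hm2 using hmap
    have hspan : ∀ i, ∃ wrd, A.AcceptsRef wrd ∧ letters wrd = d ∧ refMapping wrd = m i := by
      intro i
      have : m i ∈ A.spanner d := by rw [hAD]; exact hmD i
      exact this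
    choose Wd hWacc hWlet hWmap using hspan
    have hval : ∀ i, ValidRef (Wd i) := fun i => hseq _ (hWacc i)
    have hpath : ∀ i, ∃ qf, qf ∈ A.final ∧ A.Path A.init (Wd i) qf := by
      intro i
      obtain ⟨qf, h1, h2⟩ := hWacc i
      exact ⟨qf, h1, h2⟩
    choose qf hqf hqpath using hpath
    have hrun : ∀ i, ∃ ρ : ℕ → Q, ρ 0 = A.init ∧ ρ (Wd i).length = qf i ∧ IsRun A (Wd i) ρ :=
      fun i => exists_run_of_path (hqpath i)
    choose ρ hρ0 hρend hρrun using hrun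
    -- hulls
    set a : Fin N → ℕ := fun i => (pairHull (f i).1 (f i).2).1 with ha
    set b : Fin N → ℕ := fun i => (pairHull (f i).1 (f i).2).2 with hb
    -- span values of each mapping
    have hvs : ∀ i z s, m i z = some s → s.1 ≤ s.2 ∧ s.2 ≤ d.length := by
      intro i z s hz
      have hz' : refMapping (Wd i) z = some s := by rw [hWmap i]; exact hz
      obtain ⟨_, _, _, _, h5, h6⟩ := refMapping_isSpan (hval i) hz'
      exact ⟨h5, by rwa [hWlet i] at h6⟩
    have hbound : ∀ i z s, refMapping (Wd i) z = some s → a i ≤ s.1 ∧ s.2 ≤ b i := by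
      intro i z s hz
      have hz' : m i z = some s := by rw [← hWmap i]; exact hz
      rcases z with ⟨⟩ | ⟨⟩
      · rw [hm1 i] at hz'
        exact (pairHull_spec (f i).1 (f i).2).1 s hz'
      · rw [hm2 i] at hz'
        exact (pairHull_spec (f i).1 (f i).2).2 s hz'
    have hne : ∀ i : Fin N, (f i).1 ≠ (f i).2 := fun i => (hf1 i).2
    have hull_facts : ∀ i : Fin N, a i < b i ∧ b i ≤ d.length := by
      intro i
      rcases hv1 : (f i).1 with _ | s1 <;> rcases hv2 : (f i).2 with _ | s2
      · exact absurd (hv1.trans hv2.symm) (hne i)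
      · have hsp := hvs i (Sum.inr ()) s2 (by rw [hm2 i, hv2])
        have hab : a i = s2.1 ∧ b i = s2.2 := by
          simp [ha, hb, hv1, hv2, pairHull]
        refine ⟨?_, by omega⟩
        by_contra hcon
        have hs2 : s2 = (s2.1, s2.1) := by
          have : s2.1 = s2.2 := by omega
          rw [Prod.ext_iff]; exact ⟨rfl, this.symm⟩
        exact hA ⟨d, s2.1, by omega, Or.inl ⟨m i, hmD i, by rw [hm1 i, hv1],
          by rw [hm2 i, hv2, ← hs2]⟩⟩
      · have hsp := hvs i (Sum.inl ()) s1 (by rw [hm1 i, hv1])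
        have hab : a i = s1.1 ∧ b i = s1.2 := by
          simp [ha, hb, hv1, hv2, pairHull]
        refine ⟨?_, by omega⟩
        by_contra hcon
        have hs1 : s1 = (s1.1, s1.1) := by
          have : s1.1 = s1.2 := by omega
          rw [Prod.ext_iff]; exact ⟨rfl, this.symm⟩
        exact hA ⟨d, s1.1, by omega, Or.inr ⟨m i, hmD i, by rw [hm1 i, hv1, ← hs1],
          by rw [hm2 i, hv2]⟩⟩
      · have hsp1 := hvs i (Sum.inl ()) s1 (by rw [hm1 i, hv1])
        have hsp2 := hvs i (Sum.inr ()) s2 (by rw [hm2 i, hv2])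
        have hab : a i = min s1.1 s2.1 ∧ b i = max s1.2 s2.2 := by
          simp [ha, hb, hv1, hv2, pairHull]
        refine ⟨?_, by omega⟩
        by_contra hcon
        have hs : s1 = s2 := by
          rw [Prod.ext_iff]; omega
        exact (hne i) (by rw [hv1, hv2, hs])
    have hdisj : ∀ i j : Fin N, i ≠ j → min (b i) (b j) ≤ max (a i) (a j) := by
      intro i j hij
      exact hf2 i j hij
    have hainj : Function.Injective a := by
      intro i j hij
      by_contra hcon
      have h1 := hdisj i j hcon
      have h2 := (hull_facts i).1
      have h3 := (hull_facts j).1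
      omega
    have key : ∀ i j : Fin N, a i < a j → b i ≤ a j := by
      intro i j hij
      have hcne : i ≠ j := fun hc => by rw [hc] at hij; omega
      have h1 := hdisj i j hcne
      have h3 := (hull_facts j).1
      omega
    -- sort by hull start
    set σ := Tuple.sort a with hσ
    have hsorted : StrictMono (a ∘ σ) :=
      (Tuple.monotone_sort a).strictMono_of_injective (hainj.comp (Equiv.injective σ))
    -- Ramsey coloring
    set col : ℕ → ℕ → Q × Q := fun i j =>
      if hij : i < N ∧ j < N then
        (ρ (σ ⟨j, hij.2⟩) (cutL (Wd (σ ⟨j, hij.2⟩)) (a (σ ⟨i, hij.1⟩))),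
         ρ (σ ⟨i, hij.1⟩) (cutR (Wd (σ ⟨i, hij.1⟩)) (a (σ ⟨j, hij.2⟩))))
      else (A.init, A.init) with hcol
    obtain ⟨x, hxmono, hxmem, cc, hcc⟩ := mono_five col (Finset.range N)
      (by rw [Finset.card_range])
    have hxlt : ∀ t, x t < N := fun t => Finset.mem_range.1 (hxmem t)
    set κ : Fin 5 → Fin N := fun t => σ ⟨x t, hxlt t⟩ with hκ
    have hκord : ∀ t t' : Fin 5, t < t' → a (κ t) < a (κ t') := by
      intro t t' htt
      exact hsorted (show (⟨x t, hxlt t⟩ : Fin N) < ⟨x t', hxlt t'⟩ from hxmono htt)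
    have hcceq : ∀ t t' : Fin 5, t < t' →
        ρ (κ t') (cutL (Wd (κ t')) (a (κ t))) = cc.1 ∧
        ρ (κ t) (cutR (Wd (κ t)) (a (κ t'))) = cc.2 := by
      intro t t' htt
      have := hcc t t' htt
      simp only [hcol] at this
      rw [dif_pos ⟨hxlt t, hxlt t'⟩] at this
      exact ⟨congrArg Prod.fst this, congrArg Prod.snd this⟩
    -- the five indices
    set J := κ 0 with hJdef
    set K := κ 1 with hKdef
    set L := κ 2 with hLdef
    set M5 := κ 3 with hM5def
    set O := κ 4 with hOdef
    have hXKL : ρ L (cutL (Wd L) (a K)) = cc.1 := (hcceq 1 2 (by decide)).1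
    have hXKO : ρ O (cutL (Wd O) (a K)) = cc.1 := (hcceq 1 4 (by decide)).1
    have hXMO : ρ O (cutL (Wd O) (a M5)) = cc.1 := (hcceq 3 4 (by decide)).1
    have hYLM : ρ L (cutR (Wd L) (a M5)) = cc.2 := (hcceq 2 3 (by decide)).2
    have hYJK : ρ J (cutR (Wd J) (a K)) = cc.2 := (hcceq 0 1 (by decide)).2
    have hYJM : ρ J (cutR (Wd J) (a M5)) = cc.2 := (hcceq 0 3 (by decide)).2
    have hord01 : a J < a K := hκord 0 1 (by decide)
    have hord12 : a K < a L := hκord 1 2 (by decide)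
    have hord23 : a L < a M5 := hκord 2 3 (by decide)
    have hord34 : a M5 < a O := hκord 3 4 (by decide)
    have hbJK : b J ≤ a K := key J K hord01
    have hbLM : b L ≤ a M5 := key L M5 hord23
    have hbMd : b M5 ≤ d.length := (hull_facts M5).2
    have haMM : a M5 < b M5 := (hull_facts M5).1
    set aK := a K with haKdef
    set aM := a M5 with haMdef
    have haMd : aM ≤ d.length := by omega
    have haKd : aK ≤ d.length := by omega
    have haKM : aK ≤ aM := by omega
    -- words
    set u : List α := d.take aK with hu
    set v : List α := (d.take aM).drop aK with hv
    set w : List α := d.drop aM with hw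
    have hulen : u.length = aK := by
      rw [hu, List.length_take]; omega
    have hvlen : v.length = aM - aK := by
      rw [hv, List.length_drop, List.length_take]; omega
    -- letters of cut prefixes
    have hletcL : ∀ (i : Fin N) (k : ℕ), letters ((Wd i).take (cutL (Wd i) k)) = d.take k := by
      intro i k; rw [letters_take_cutL, hWlet]
    have hletcR : ∀ (i : Fin N) (k : ℕ), letters ((Wd i).take (cutR (Wd i) k)) = d.take k := by
      intro i k; rw [letters_take_cutR, hWlet]
    have hlencL : ∀ (i : Fin N) (k : ℕ), k ≤ d.length →
        (letters ((Wd i).take (cutL (Wd i) k))).length = k := by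
      intro i k hk; rw [hletcL, List.length_take]; omega
    have hlencR : ∀ (i : Fin N) (k : ℕ), k ≤ d.length →
        (letters ((Wd i).take (cutR (Wd i) k))).length = k := by
      intro i k hk; rw [hletcR, List.length_take]; omega
    have hcLL : ∀ (i : Fin N) (k k' : ℕ), k ≤ k' → k' ≤ d.length →
        cutL (Wd i) k ≤ cutL (Wd i) k' := by
      intro i k k' hkk hk'
      exact cutL_le_of_count_ge _ _ _ (by rw [hlencL i k' hk']; exact hkk)
    have hcLR : ∀ (i : Fin N) (k k' : ℕ), k ≤ k' → k' ≤ d.length →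
        cutL (Wd i) k ≤ cutR (Wd i) k' := by
      intro i k k' hkk hk'
      exact cutL_le_of_count_ge _ _ _ (by rw [hlencR i k' hk']; exact hkk)
    -- marker bounds
    have hmkO : ∀ l ∈ Wd O, ¬ IsLetter l → a O ≤ labelPos (Wd O) l ∧ labelPos (Wd O) l ≤ b O :=
      marker_pos_bound (hval O) (fun z s hs => hbound O z s hs)
    have hmkL : ∀ l ∈ Wd L, ¬ IsLetter l → a L ≤ labelPos (Wd L) l ∧ labelPos (Wd L) l ≤ b L :=
      marker_pos_bound (hval L) (fun z s hs => hbound L z s hs)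
    have hmkJ : ∀ l ∈ Wd J, ¬ IsLetter l → a J ≤ labelPos (Wd J) l ∧ labelPos (Wd J) l ≤ b J :=
      marker_pos_bound (hval J) (fun z s hs => hbound J z s hs)
    -- pieces
    set U := (Wd O).take (cutL (Wd O) aK) with hU
    set V0 := ((Wd O).take (cutL (Wd O) aM)).drop (cutL (Wd O) aK) with hV0
    set V1 := ((Wd L).take (cutR (Wd L) aM)).drop (cutL (Wd L) aK) with hV1
    set V0' := ((Wd J).take (cutR (Wd J) aM)).drop (cutR (Wd J) aK) with hV0'
    set Wsuf := (Wd J).drop (cutR (Wd J) aM) with hWsuf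
    -- letters of pieces
    have htakelen : (d.take aK).length = aK := by rw [List.length_take]; omega
    have hlU : letters U = u := (hletcL O aK).trans hu.symm
    have hlV0 : letters V0 = v := by
      have := letters_slice (hcLL O aK aM haKM haMd) (hletcL O aK) (hletcL O aM)
      rw [htakelen] at this
      exact this.trans hv.symm
    have hlV1 : letters V1 = v := by
      have := letters_slice (hcLR L aK aM haKM haMd) (hletcL L aK) (hletcR L aM)
      rw [htakelen] at this
      exact this.trans hv.symm
    have hlV0' : letters V0' = v := by
      have := letters_slice (cutR_mono (Wd J) haKM) (hletcR J aK) (hletcR J aM)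
      rw [htakelen] at this
      exact this.trans hv.symm
    have hlWsuf : letters Wsuf = w := by
      rw [hWsuf, letters_drop_cutR, hWlet]
    -- no-marker facts
    have hnmU : NoMarker U :=
      noMarker_take_cutL (fun l hl hnl => le_trans (by omega) (hmkO l hl hnl).1)
    have hnmtakeO : NoMarker ((Wd O).take (cutL (Wd O) aM)) :=
      noMarker_take_cutL (fun l hl hnl => le_trans (by omega) (hmkO l hl hnl).1)
    have hnmV0 : NoMarker V0 := fun l hl => hnmtakeO l (List.mem_of_mem_drop hl)
    have hnmdropJK : NoMarker ((Wd J).drop (cutR (Wd J) aK)) :=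
      noMarker_drop_cutR (marker_count_le_one (hval J))
        (fun l hl hnl => le_trans (hmkJ l hl hnl).2 (by omega))
    have hnmV0' : NoMarker V0' := by
      intro l hl
      rw [hV0', List.drop_take] at hl
      exact hnmdropJK l (List.mem_of_mem_take hl)
    have hnmWsuf : NoMarker Wsuf :=
      noMarker_drop_cutR (marker_count_le_one (hval J))
        (fun l hl hnl => le_trans (hmkJ l hl hnl).2 (by omega))
    have hnmA1 : NoMarker ((Wd L).take (cutL (Wd L) aK)) :=
      noMarker_take_cutL (fun l hl hnl => le_trans (by omega) (hmkL l hl hnl).1)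
    have hnmB1 : NoMarker ((Wd L).drop (cutR (Wd L) aM)) :=
      noMarker_drop_cutR (marker_count_le_one (hval L))
        (fun l hl hnl => le_trans (hmkL l hl hnl).2 (by omega))
    -- decomposition of Wd L
    have hcL_LR : cutL (Wd L) aK ≤ cutR (Wd L) aM := hcLR L aK aM haKM haMd
    have hWLdec : Wd L = (Wd L).take (cutL (Wd L) aK) ++ V1 ++ (Wd L).drop (cutR (Wd L) aM) := by
      have h1 : (Wd L).take (cutL (Wd L) aK) ++ V1 = (Wd L).take (cutR (Wd L) aM) := by
        rw [hV1]
        conv_rhs => rw [← List.take_append_drop (cutL (Wd L) aK) ((Wd L).take (cutR (Wd L) aM))]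
        rw [List.take_take, min_eq_left hcL_LR]
      rw [h1, List.take_append_drop]
    -- paths
    have hpU : A.Path A.init U cc.1 := by
      have hseg := run_segment (hρrun O) (Nat.zero_le (cutL (Wd O) aK)) (cutL_le_length _ _)
      rw [List.drop_zero, hρ0 O, hXKO] at hseg
      exact hseg
    have hpV0 : A.Path cc.1 V0 cc.1 := by
      have hseg := run_segment (hρrun O) (hcLL O aK aM haKM haMd) (cutL_le_length _ _)
      rwa [hXKO, hXMO] at hseg
    have hpV1 : A.Path cc.1 V1 cc.2 := by
      have hseg := run_segment (hρrun L) hcL_LR (cutR_le_length _ _)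
      rwa [hXKL, hYLM] at hseg
    have hpV0' : A.Path cc.2 V0' cc.2 := by
      have hseg := run_segment (hρrun J) (cutR_mono (Wd J) haKM) (cutR_le_length _ _)
      rwa [hYJK, hYJM] at hseg
    have hpWsuf : A.Path cc.2 Wsuf (qf J) := by
      have hseg := run_segment (hρrun J) (cutR_le_length (Wd J) aM) (le_refl (Wd J).length)
      rw [List.take_length, hYJM, hρend J] at hseg
      exact hseg
    -- the spans
    set s1 : Option Span := Option.map (fun s : Span => (s.1 - aK, s.2 - aK)) (m L (Sum.inl ()))
      with hs1
    set s2 : Option Span := Option.map (fun s : Span => (s.1 - aK, s.2 - aK)) (m L (Sum.inr ()))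
      with hs2
    have hMLne : m L (Sum.inl ()) ≠ m L (Sum.inr ()) := by
      rw [hm1 L, hm2 L]; exact hne L
    have hcomp : ∀ z s, m L z = some s → a L ≤ s.1 ∧ s.1 ≤ s.2 ∧ s.2 ≤ b L ∧ s.2 ≤ d.length := by
      intro z s hzs
      have h1 := hbound L z s (by rw [hWmap L]; exact hzs)
      have h2 := hvs L z s hzs
      exact ⟨h1.1, h2.1, h1.2, h2.2⟩
    have hstrict : s1 ≠ s2 := by
      rw [hs1, hs2]
      intro heq
      rcases hv1 : m L (Sum.inl ()) with _ | t1 <;> rcases hv2 : m L (Sum.inr ()) with _ | t2 <;>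
        rw [hv1, hv2] at heq
      · exact hMLne (hv1.trans hv2.symm)
      · simp at heq
      · simp at heq
      · simp only [Option.map_some, Option.some.injEq, Prod.ext_iff] at heq
        have hc1 := hcomp _ t1 hv1
        have hc2 := hcomp _ t2 hv2
        apply hMLne
        rw [hv1, hv2]
        have ht : t1 = t2 := by rw [Prod.ext_iff]; omega
        rw [ht]
    have hsbound : ∀ (z : Unit ⊕ Unit) (s0 : Span),
        Option.map (fun s : Span => (s.1 - aK, s.2 - aK)) (m L z) = some s0 →
        s0.1 ≤ s0.2 ∧ s0.2 ≤ v.length := by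
      intro z s0 hz
      rcases hvz : m L z with _ | t
      · rw [hvz] at hz; simp at hz
      · rw [hvz] at hz
        simp only [Option.map_some, Option.some.injEq] at hz
        have hc := hcomp z t hvz
        rw [← hz]
        simp only
        omega
    have hnotboth : ¬(s1 = none ∧ s2 = none) := by
      rintro ⟨h1, h2⟩
      rw [hs1] at h1; rw [hs2] at h2
      apply hMLne
      rcases hv1 : m L (Sum.inl ()) with _ | t1
      · rcases hv2 : m L (Sum.inr ()) with _ | t2
        · rfl
        · rw [hv2] at h2; simp at h2
      · rw [hv1] at h1; simp at h1
    have hhull : (pairHull s1 s2).2 ≤ v.length := by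
      rw [hs1, hs2]
      rcases hv1 : m L (Sum.inl ()) with _ | t1 <;> rcases hv2 : m L (Sum.inr ()) with _ | t2
      · exact absurd (hv1.trans hv2.symm) hMLne
      · have hc := hcomp _ t2 hv2
        simp only [Option.map_none, Option.map_some, pairHull]
        omega
      · have hc := hcomp _ t1 hv1
        simp only [Option.map_none, Option.map_some, pairHull]
        omega
      · have hc1 := hcomp _ t1 hv1
        have hc2 := hcomp _ t2 hv2
        simp only [Option.map_some, pairHull]
        omega
    refine ⟨u, v, w, s1, s2, hstrict, ?_, ?_, ?_⟩
    · intro s hs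
      rw [hs1] at hs
      exact hsbound (Sum.inl ()) s hs
    · intro s hs
      rw [hs2] at hs
      exact hsbound (Sum.inr ()) s hs
    intro n hn
    constructor
    · intro i
      have hiN : i.1 < n := i.2
      have hnmP : NoMarker (U ++ (List.replicate i.1 V0).flatten) := by
        intro l hl
        rcases List.mem_append.1 hl with hm | hm
        · exact hnmU l hm
        · exact noMarker_flatten_replicate hnmV0 i.1 l hm
      have hnmS : NoMarker ((List.replicate (n - 1 - i.1) V0').flatten ++ Wsuf) := by
        intro l hl
        rcases List.mem_append.1 hl with hm | hm
        · exact noMarker_flatten_replicate hnmV0' (n - 1 - i.1) l hm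
        · exact hnmWsuf l hm
      set P := U ++ (List.replicate i.1 V0).flatten with hP
      set S := (List.replicate (n - 1 - i.1) V0').flatten ++ Wsuf with hS
      set R := P ++ V1 ++ S with hR
      have hlP : (letters P).length = u.length + i.1 * v.length := by
        rw [hP, letters_append, List.length_append, hlU, letters_flatten_replicate,
          hlV0, length_flatten_replicate]
      have haccR : A.AcceptsRef R := by
        refine ⟨qf J, hqf J, ?_⟩
        rw [hR, hP, hS]
        exact path_append (path_append (path_append hpU (path_flatten_replicate hpV0 i.1)) hpV1)
          (path_append (path_flatten_replicate hpV0' (n - 1 - i.1)) hpWsuf)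
      have hletR : letters R = u ++ (List.replicate n v).flatten ++ w := by
        rw [hR, hP, hS, letters_append, letters_append, letters_append, letters_append,
          hlU, hlV1, hlWsuf, letters_flatten_replicate, letters_flatten_replicate,
          hlV0, hlV0', flatten_replicate_split v hiN]
        simp [List.append_assoc]
      have hmapR : ∀ z : Unit ⊕ Unit, refMapping R z =
          shiftOpt (u.length + i.1 * v.length)
            (Option.map (fun s : Span => (s.1 - aK, s.2 - aK)) (m L z)) := by
        intro z
        rcases hvz : m L z with _ | t
        · have hno : Label.vopen z ∉ Wd L :=
            refMapping_none_of_eq_none (by rw [hWmap L]; exact hvz)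
          have hnoR : Label.vopen z ∉ R := by
            rw [hR]
            intro hmem
            rcases List.mem_append.1 hmem with hm | hm
            · rcases List.mem_append.1 hm with hm' | hm'
              · exact (not_mem_of_noMarker hnmP).1 hm'
              · refine hno ?_
                rw [hV1] at hm'
                exact List.mem_of_mem_take (List.mem_of_mem_drop hm')
            · exact (not_mem_of_noMarker hnmS).1 hm
          rw [refMapping_decomp_none R z hnoR]
          simp [shiftOpt]
        · have hrz : refMapping (Wd L) z = some t := by rw [hWmap L]; exact hvz
          obtain ⟨hoin, hcin, _, _, _, _⟩ := refMapping_isSpan (hval L) hrz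
          have hcz := hcomp z t hvz
          have hoV1 : Label.vopen z ∈ V1 := by
            rw [hV1]
            exact mem_middle hoin (not_mem_of_noMarker hnmA1).1 (not_mem_of_noMarker hnmB1).1
              hcL_LR
          have hcV1 : Label.vclose z ∈ V1 := by
            rw [hV1]
            exact mem_middle hcin (not_mem_of_noMarker hnmA1).2 (not_mem_of_noMarker hnmB1).2
              hcL_LR
          have hWLcomp := refMapping_decomp_some ((Wd L).take (cutL (Wd L) aK)) V1
            ((Wd L).drop (cutR (Wd L) aM)) z (not_mem_of_noMarker hnmA1).1
            (not_mem_of_noMarker hnmA1).2 hoV1 hcV1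
          rw [← hWLdec, hrz, hlencL L aK haKd] at hWLcomp
          have hinj := Option.some.inj hWLcomp
          have ht1 : t.1 = aK + (letters (V1.take (V1.idxOf (Label.vopen z)))).length :=
            congrArg Prod.fst hinj
          have ht2 : t.2 = aK + (letters (V1.take (V1.idxOf (Label.vclose z)))).length :=
            congrArg Prod.snd hinj
          have hRcomp := refMapping_decomp_some P V1 S z (not_mem_of_noMarker hnmP).1
            (not_mem_of_noMarker hnmP).2 hoV1 hcV1
          rw [← hR, hlP] at hRcomp
          rw [hRcomp]
          simp only [Option.map_some, shiftOpt, Option.some.injEq, Prod.ext_iff]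
          constructor <;> omega
      constructor
      · refine ⟨refMapping R, ?_, ?_, ?_⟩
        · rw [← hAD]
          exact ⟨R, haccR, hletR, rfl⟩
        · rw [hmapR (Sum.inl ()), hs1]
        · rw [hmapR (Sum.inr ()), hs2]
      · intro heq
        exact hstrict (shiftOpt_injective _ heq)
    · intro i j hij
      have haux : ∀ o1 o2 : ℕ, o1 + v.length ≤ o2 →
          SpansDisjoint (pairHull (shiftOpt o1 s1) (shiftOpt o1 s2))
            (pairHull (shiftOpt o2 s1) (shiftOpt o2 s2)) := by
        intro o1 o2 ho
        rw [shift_pairHull _ _ _ hnotboth, shift_pairHull _ _ _ hnotboth]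
        unfold SpansDisjoint
        simp only
        omega
      rcases Nat.lt_or_ge i.1 j.1 with hlt | hge
      · have hmul : (i.1 + 1) * v.length ≤ j.1 * v.length := Nat.mul_le_mul_right _ (by omega)
        rw [add_one_mul] at hmul
        exact haux _ _ (by omega)
      · have hlt : j.1 < i.1 := by
          rcases Nat.lt_or_ge j.1 i.1 with h' | h'
          · exact h'
          · exact absurd (Fin.ext (show i.1 = j.1 by omega)) hij
        have hmul : (j.1 + 1) * v.length ≤ i.1 * v.length := Nat.mul_le_mul_right _ (by omega)
        rw [add_one_mul] at hmul
        exact spansDisjoint_symm (haux _ _ (by omega))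



end DocSpanners
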